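/- Let (Ω, ℱ, P) be a probability space with a filtration (ℱ_i)_{i≥0}, let S be a finite nonempty set with |S| elements, and let X_1, X_2, … be functions from Ω to (S → ℝ) such that each X_i is ℱ_i-measurable, E[ X_i(s') | ℱ_{i−1} ] = 0 almost surely for every s' ∈ S, and Σ_{s'∈S} |X_i(s')| ≤ 2 almost surely. Then for every n ≥ 1 and every ε > 0, P( Σ_{s'∈S} | Σ_{i=1}^{n} X_i(s') | ≥ ε ) ≤ 2^{|S|} · exp( −ε² / (8n) ). -/

import Mathlib

open MeasureTheory Real Finset

/-- Pointwise convexity bound: for `|y| ≤ 2`, `exp (t*y) ≤ cosh (2*t) + (sinh(2*t)/2) * y`. -/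
lemma exp_le_cosh_add (t y : ℝ) (hy : |y| ≤ 2) :
    Real.exp (t * y) ≤ Real.cosh (2 * t) + (Real.sinh (2 * t) / 2) * y := by
  have hy1 : -2 ≤ y := (abs_le.1 hy).1
  have hy2 : y ≤ 2 := (abs_le.1 hy).2
  have h := convexOn_exp.2 (Set.mem_univ (-(2*t))) (Set.mem_univ (2*t))
    (by linarith : (0:ℝ) ≤ (2 - y)/4) (by linarith : (0:ℝ) ≤ (2 + y)/4) (by ring)
  simp only [smul_eq_mul] at h
  have heq : (2 - y)/4 * (-(2*t)) + (2 + y)/4 * (2*t) = t * y := by ring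
  rw [heq] at h
  rw [Real.cosh_eq, Real.sinh_eq]
  calc Real.exp (t*y) ≤ (2 - y)/4 * Real.exp (-(2*t)) + (2 + y)/4 * Real.exp (2*t) := h
    _ = (Real.exp (2*t) + Real.exp (-(2*t))) / 2
        + ((Real.exp (2*t) - Real.exp (-(2*t))) / 2 / 2) * y := by ring

/-- Scalar Azuma-type mgf bound for a martingale difference sequence bounded by 2. -/
lemma azuma_mgf {Ω : Type*} {m0 : MeasurableSpace Ω} (μ : Measure Ω) [IsProbabilityMeasure μ]
    (ℱ : Filtration ℕ m0) (Y : ℕ → Ω → ℝ)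
    (hmeas : ∀ i, 1 ≤ i → Measurable[ℱ i] (Y i))
    (hmean : ∀ i, 1 ≤ i → μ[Y i | ℱ (i - 1)] =ᵐ[μ] 0)
    (hbdd : ∀ i, 1 ≤ i → ∀ᵐ ω ∂μ, |Y i ω| ≤ 2)
    (t : ℝ) (n : ℕ) :
    ∫ ω, Real.exp (t * ∑ i ∈ Finset.Icc 1 n, Y i ω) ∂μ ≤ Real.exp (2 * t ^ 2 * n) := by
  induction n with
  | zero => simp
  | succ n ih =>
    set F : Ω → ℝ := fun ω => Real.exp (t * ∑ i ∈ Finset.Icc 1 n, Y i ω) with hF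
    set G : Ω → ℝ := fun ω => Real.exp (t * Y (n+1) ω) with hG
    -- measurability
    have hSmeas : Measurable[ℱ n] (fun ω => ∑ i ∈ Finset.Icc 1 n, Y i ω) := by
      apply Finset.measurable_sum
      intro i hi
      rw [Finset.mem_Icc] at hi
      exact (hmeas i hi.1).mono (ℱ.mono hi.2) le_rfl
    have hFmeas : StronglyMeasurable[ℱ n] F :=
      (Real.measurable_exp.comp (hSmeas.const_mul t)).stronglyMeasurable
    have hFmeas0 : AEStronglyMeasurable F μ :=
      (hFmeas.mono (ℱ.le n)).aestronglyMeasurable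
    have hGmeas0 : AEStronglyMeasurable G μ :=
      ((Real.measurable_exp.comp
        (((hmeas (n+1) (Nat.le_add_left 1 n)).mono (ℱ.le (n+1)) le_rfl).const_mul t)).stronglyMeasurable).aestronglyMeasurable
    -- a.e. bounds
    have hFbdd : ∀ᵐ ω ∂μ, ‖F ω‖ ≤ Real.exp (|t| * (2 * n)) := by
      have : ∀ᵐ ω ∂μ, ∀ i ∈ Finset.Icc 1 n, |Y i ω| ≤ 2 := by
        rw [Filter.eventually_all_finset]
        intro i hi
        exact hbdd i (Finset.mem_Icc.1 hi).1
      filter_upwards [this] with ω hω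
      rw [Real.norm_eq_abs, Real.abs_exp, Real.exp_le_exp]
      calc t * ∑ i ∈ Finset.Icc 1 n, Y i ω ≤ |t * ∑ i ∈ Finset.Icc 1 n, Y i ω| := le_abs_self _
        _ = |t| * |∑ i ∈ Finset.Icc 1 n, Y i ω| := abs_mul _ _
        _ ≤ |t| * (2 * n) := by
            apply mul_le_mul_of_nonneg_left _ (abs_nonneg t)
            calc |∑ i ∈ Finset.Icc 1 n, Y i ω| ≤ ∑ i ∈ Finset.Icc 1 n, |Y i ω| :=
                  Finset.abs_sum_le_sum_abs _ _
              _ ≤ ∑ i ∈ Finset.Icc 1 n, (2:ℝ) := Finset.sum_le_sum hω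
              _ ≤ 2 * n := by
                  rw [Finset.sum_const, Nat.card_Icc, nsmul_eq_mul]
                  have : ((n + 1 - 1 : ℕ) : ℝ) = (n : ℝ) := by norm_num
                  rw [this]; linarith
    have hGbdd : ∀ᵐ ω ∂μ, ‖G ω‖ ≤ Real.exp (|t| * 2) := by
      filter_upwards [hbdd (n+1) (Nat.le_add_left 1 n)] with ω hω
      rw [Real.norm_eq_abs, Real.abs_exp, Real.exp_le_exp]
      calc t * Y (n+1) ω ≤ |t * Y (n+1) ω| := le_abs_self _
        _ = |t| * |Y (n+1) ω| := abs_mul _ _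
        _ ≤ |t| * 2 := mul_le_mul_of_nonneg_left hω (abs_nonneg t)
    -- integrability
    have hFint : Integrable F μ :=
      (integrable_const (Real.exp (|t| * (2 * n)))).mono' hFmeas0 hFbdd
    have hGint : Integrable G μ :=
      (integrable_const (Real.exp (|t| * 2))).mono' hGmeas0 hGbdd
    have hYint : Integrable (Y (n+1)) μ := by
      refine (integrable_const (2:ℝ)).mono'
        ((hmeas (n+1) (Nat.le_add_left 1 n)).mono (ℱ.le (n+1)) le_rfl).aestronglyMeasurable ?_
      filter_upwards [hbdd (n+1) (Nat.le_add_left 1 n)] with ω hω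
      rwa [Real.norm_eq_abs]
    -- conditional expectation bound on G
    have hcond : μ[G | ℱ n] ≤ᵐ[μ] fun _ => Real.exp (2 * t ^ 2) := by
      set H : Ω → ℝ := fun ω => Real.cosh (2*t) + (Real.sinh (2*t)/2) * Y (n+1) ω with hH
      have hHint : Integrable H μ := (integrable_const _).add (hYint.const_mul _)
      have hGH : G ≤ᵐ[μ] H := by
        filter_upwards [hbdd (n+1) (Nat.le_add_left 1 n)] with ω hω
        exact exp_le_cosh_add t _ hω
      have h1 : μ[G | ℱ n] ≤ᵐ[μ] μ[H | ℱ n] := condExp_mono hGint hHint hGH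
      have h2 : μ[H | ℱ n] =ᵐ[μ] fun _ => Real.cosh (2*t) := by
        have hrw : H = (fun _ => Real.cosh (2*t)) + (Real.sinh (2*t)/2) • Y (n+1) := by
          funext ω; simp [hH, smul_eq_mul]
        have hadd : μ[H | ℱ n] =ᵐ[μ]
            μ[(fun _ => Real.cosh (2*t)) | ℱ n] + μ[(Real.sinh (2*t)/2) • Y (n+1) | ℱ n] := by
          rw [hrw]; exact condExp_add (integrable_const _) (hYint.smul _) _
        have hc : μ[(fun _ => Real.cosh (2*t)) | ℱ n] = fun _ => Real.cosh (2*t) :=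
          condExp_const (ℱ.le n) _
        have hs : μ[(Real.sinh (2*t)/2) • Y (n+1) | ℱ n] =ᵐ[μ] (0 : Ω → ℝ) := by
          refine (condExp_smul (Real.sinh (2*t)/2) (Y (n+1)) _).trans ?_
          have h0 := hmean (n+1) (Nat.le_add_left 1 n)
          simp only [Nat.add_sub_cancel] at h0
          filter_upwards [h0] with ω hω
          simp only [Pi.smul_apply, hω, Pi.zero_apply, smul_zero]
        refine hadd.trans ?_
        filter_upwards [hs] with ω hω
        simp [hc, hω]
      refine h1.trans (h2.trans_le (Filter.Eventually.of_forall fun ω => ?_))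
      calc Real.cosh (2*t) ≤ Real.exp ((2*t)^2/2) := Real.cosh_le_exp_half_sq _
        _ = Real.exp (2 * t^2) := by ring_nf
    -- main computation
    have hsum : ∀ ω, Real.exp (t * ∑ i ∈ Finset.Icc 1 (n+1), Y i ω) = F ω * G ω := by
      intro ω
      rw [← Finset.insert_Icc_right_eq_Icc_add_one (Nat.le_add_left 1 n),
        Finset.sum_insert (by simp), mul_add, Real.exp_add, hF, hG]
      ring
    have hFGint : Integrable (fun ω => F ω * G ω) μ := hGint.bdd_mul hFmeas0 hFbdd
    calc ∫ ω, Real.exp (t * ∑ i ∈ Finset.Icc 1 (n+1), Y i ω) ∂μ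
        = ∫ ω, F ω * G ω ∂μ := by simp_rw [hsum]
      _ = ∫ ω, (μ[fun ω => F ω * G ω | ℱ n]) ω ∂μ := (integral_condExp (ℱ.le n)).symm
      _ = ∫ ω, F ω * (μ[G | ℱ n]) ω ∂μ := by
          apply integral_congr_ae
          have := condExp_stronglyMeasurable_mul_of_bound (ℱ.le n) hFmeas hGint _ hFbdd
          filter_upwards [this] with ω hω
          exact hω
      _ ≤ ∫ ω, F ω * Real.exp (2 * t ^ 2) ∂μ := by
          apply integral_mono_ae
          · exact (integrable_condExp.congr
              (condExp_stronglyMeasurable_mul_of_bound (ℱ.le n) hFmeas hGint _ hFbdd))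
          · exact hFint.mul_const _
          · filter_upwards [hcond] with ω hω
            exact mul_le_mul_of_nonneg_left hω (Real.exp_nonneg _)
      _ = (∫ ω, F ω ∂μ) * Real.exp (2 * t ^ 2) := integral_mul_const _ _
      _ ≤ Real.exp (2 * t ^ 2 * n) * Real.exp (2 * t ^ 2) := by
          apply mul_le_mul_of_nonneg_right ih (Real.exp_nonneg _)
      _ = Real.exp (2 * t ^ 2 * ((n+1 : ℕ) : ℝ)) := by rw [← Real.exp_add]; congr 1; push_cast; ring

/-- Concentration of an `(S → ℝ)`-valued martingale difference sequence in ℓ¹-norm: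
if each `X_i` is `ℱ_i`-measurable, has conditional mean `0` given `ℱ_{i−1}`, and
ℓ¹-norm at most `2` a.s., then
`P( Σ_{s'} |Σ_{i=1}^n X_i(s')| ≥ ε ) ≤ 2^{|S|} · exp(−ε²/(8n))`. -/
theorem l1_martingale_concentration
    {Ω : Type*} {m0 : MeasurableSpace Ω} (μ : Measure Ω) [IsProbabilityMeasure μ]
    (ℱ : Filtration ℕ m0)
    {S : Type*} [Fintype S] [Nonempty S]
    (X : ℕ → Ω → S → ℝ)
    (hX_meas : ∀ i, 1 ≤ i → ∀ s' : S, Measurable[ℱ i] (fun ω => X i ω s'))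
    (hX_mean : ∀ i, 1 ≤ i → ∀ s' : S,
      μ[(fun ω => X i ω s') | ℱ (i - 1)] =ᵐ[μ] 0)
    (hX_bdd : ∀ i, 1 ≤ i → ∀ᵐ ω ∂μ, (∑ s', |X i ω s'|) ≤ 2)
    (n : ℕ) (hn : 1 ≤ n) (ε : ℝ) (hε : 0 < ε) :
    μ {ω | ε ≤ ∑ s', |∑ i ∈ Finset.Icc 1 n, X i ω s'|} ≤
      ENNReal.ofReal ((2 : ℝ) ^ (Fintype.card S) * Real.exp (-ε ^ 2 / (8 * n))) := by
  classical
  have hn0 : (0:ℝ) < n := by exact_mod_cast hn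
  -- sign vectors
  set c : (S → Bool) → S → ℝ := fun x s => if x s then 1 else -1 with hc
  have hc_abs : ∀ x s, |c x s| = 1 := by
    intro x s; by_cases h : x s <;> simp [hc, h]
  set A : (S → Bool) → Set Ω :=
    fun x => {ω | ε ≤ ∑ s', c x s' * ∑ i ∈ Finset.Icc 1 n, X i ω s'} with hA
  -- step 1: inclusion into union
  have hsub : {ω | ε ≤ ∑ s', |∑ i ∈ Finset.Icc 1 n, X i ω s'|} ⊆ ⋃ x, A x := by
    intro ω hω
    refine Set.mem_iUnion.2 ⟨fun s => decide (0 ≤ ∑ i ∈ Finset.Icc 1 n, X i ω s), ?_⟩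
    simp only [hA, Set.mem_setOf_eq]
    have : ∀ s : S, c (fun s => decide (0 ≤ ∑ i ∈ Finset.Icc 1 n, X i ω s)) s *
        ∑ i ∈ Finset.Icc 1 n, X i ω s = |∑ i ∈ Finset.Icc 1 n, X i ω s| := by
      intro s
      by_cases h : 0 ≤ ∑ i ∈ Finset.Icc 1 n, X i ω s
      · simp [hc, h, abs_of_nonneg h]
      · simp [hc, h, abs_of_neg (lt_of_not_ge h)]
    rw [Finset.sum_congr rfl fun s _ => this s]
    exact hω
  -- step 2: individual bound
  have hbound : ∀ x : S → Bool, μ (A x) ≤ ENNReal.ofReal (Real.exp (-ε^2 / (8*n))) := by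
    intro x
    set Y : ℕ → Ω → ℝ := fun i ω => ∑ s', c x s' * X i ω s' with hY
    set t : ℝ := ε / (4 * n) with ht
    have ht0 : 0 ≤ t := by positivity
    have hmeas : ∀ i, 1 ≤ i → Measurable[ℱ i] (Y i) := by
      intro i hi
      exact Finset.measurable_sum _ fun s _ => (hX_meas i hi s).const_mul _
    have hXint : ∀ i, 1 ≤ i → ∀ s : S, Integrable (fun ω => X i ω s) μ := by
      intro i hi s
      refine (integrable_const (2:ℝ)).mono'
        ((hX_meas i hi s).mono (ℱ.le i) le_rfl).aestronglyMeasurable ?_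
      filter_upwards [hX_bdd i hi] with ω hω
      rw [Real.norm_eq_abs]
      calc |X i ω s| ≤ ∑ s', |X i ω s'| :=
            Finset.single_le_sum (f := fun s' => |X i ω s'|) (fun s' _ => abs_nonneg _)
              (Finset.mem_univ s)
        _ ≤ 2 := hω
    have hmean : ∀ i, 1 ≤ i → μ[Y i | ℱ (i - 1)] =ᵐ[μ] 0 := by
      intro i hi
      have hrew : Y i = ∑ s' : S, (c x s') • (fun ω => X i ω s') := by
        funext ω; simp [hY, Finset.sum_apply, smul_eq_mul]
      rw [hrew]
      have h1 : μ[∑ s' : S, (c x s') • (fun ω => X i ω s') | ℱ (i-1)] =ᵐ[μ]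
          ∑ s' : S, μ[(c x s') • (fun ω => X i ω s') | ℱ (i-1)] :=
        condExp_finsetSum (fun s _ => (hXint i hi s).smul _) _
      refine h1.trans ?_
      have h2 : ∀ s : S, μ[(c x s) • (fun ω => X i ω s) | ℱ (i-1)] =ᵐ[μ] 0 := by
        intro s
        refine (condExp_smul (c x s) _ _).trans ?_
        filter_upwards [hX_mean i hi s] with ω hω
        simp [Pi.smul_apply, hω]
      have h3 : ∀ᵐ ω ∂μ, ∀ s ∈ Finset.univ (α := S),
          (μ[(c x s) • (fun ω => X i ω s) | ℱ (i-1)]) ω = 0 := by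
        rw [Filter.eventually_all_finset]
        intro s _
        filter_upwards [h2 s] with ω hω using hω
      filter_upwards [h3] with ω hω
      simp only [Finset.sum_apply, Pi.zero_apply]
      exact Finset.sum_eq_zero fun s hs => hω s hs
    have hbdd : ∀ i, 1 ≤ i → ∀ᵐ ω ∂μ, |Y i ω| ≤ 2 := by
      intro i hi
      filter_upwards [hX_bdd i hi] with ω hω
      calc |Y i ω| ≤ ∑ s', |c x s' * X i ω s'| := Finset.abs_sum_le_sum_abs _ _
        _ = ∑ s', |X i ω s'| := by
            refine Finset.sum_congr rfl fun s _ => ?_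
            rw [abs_mul, hc_abs, one_mul]
        _ ≤ 2 := hω
    -- the random variable and its mgf
    set Z : Ω → ℝ := fun ω => ∑ s', c x s' * ∑ i ∈ Finset.Icc 1 n, X i ω s' with hZ
    have hZeq : ∀ ω, Z ω = ∑ i ∈ Finset.Icc 1 n, Y i ω := by
      intro ω
      simp only [hZ, hY, Finset.mul_sum]
      rw [Finset.sum_comm]
    have hZmeas : AEStronglyMeasurable (fun ω => Real.exp (t * Z ω)) μ := by
      have : Measurable Z := by
        apply Finset.measurable_sum
        intro s _
        exact (Finset.measurable_sum _ fun i hi =>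
          ((hX_meas i (Finset.mem_Icc.1 hi).1 s).mono (ℱ.le i) le_rfl)).const_mul _
      exact (Real.measurable_exp.comp (this.const_mul t)).aestronglyMeasurable
    have hZbdd : ∀ᵐ ω ∂μ, ‖Real.exp (t * Z ω)‖ ≤ Real.exp (|t| * (2 * n)) := by
      have hall : ∀ᵐ ω ∂μ, ∀ i ∈ Finset.Icc 1 n, |Y i ω| ≤ 2 := by
        rw [Filter.eventually_all_finset]
        intro i hi
        exact hbdd i (Finset.mem_Icc.1 hi).1
      filter_upwards [hall] with ω hω
      rw [Real.norm_eq_abs, Real.abs_exp, Real.exp_le_exp]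
      calc t * Z ω ≤ |t * Z ω| := le_abs_self _
        _ = |t| * |Z ω| := abs_mul _ _
        _ ≤ |t| * (2 * n) := by
            apply mul_le_mul_of_nonneg_left _ (abs_nonneg t)
            rw [hZeq]
            calc |∑ i ∈ Finset.Icc 1 n, Y i ω| ≤ ∑ i ∈ Finset.Icc 1 n, |Y i ω| :=
                  Finset.abs_sum_le_sum_abs _ _
              _ ≤ ∑ i ∈ Finset.Icc 1 n, (2:ℝ) := Finset.sum_le_sum hω
              _ ≤ 2 * n := by
                  rw [Finset.sum_const, Nat.card_Icc, nsmul_eq_mul]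
                  have : ((n + 1 - 1 : ℕ) : ℝ) = (n : ℝ) := by norm_num
                  rw [this]; linarith
    have hZint : Integrable (fun ω => Real.exp (t * Z ω)) μ :=
      (integrable_const _).mono' hZmeas hZbdd
    have hmgf : ∫ ω, Real.exp (t * Z ω) ∂μ ≤ Real.exp (2 * t^2 * n) := by
      have := azuma_mgf μ ℱ Y hmeas hmean hbdd t n
      calc ∫ ω, Real.exp (t * Z ω) ∂μ
          = ∫ ω, Real.exp (t * ∑ i ∈ Finset.Icc 1 n, Y i ω) ∂μ := by
            exact integral_congr_ae (Filter.Eventually.of_forall fun ω => by simp only; rw [hZeq])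
        _ ≤ Real.exp (2 * t^2 * n) := this
    have hmarkov := ProbabilityTheory.measure_ge_le_exp_mul_mgf (X := Z) (μ := μ) ε ht0 hZint
    have harith : Real.exp (-t * ε) * Real.exp (2 * t^2 * n) = Real.exp (-ε^2 / (8*n)) := by
      rw [← Real.exp_add]
      congr 1
      rw [ht]
      field_simp
      ring
    have htoReal : (μ (A x)).toReal ≤ Real.exp (-ε^2 / (8*n)) := by
      have hAset : A x = {ω | ε ≤ Z ω} := rfl
      rw [hAset]
      calc (μ {ω | ε ≤ Z ω}).toReal ≤ Real.exp (-t * ε) * ProbabilityTheory.mgf Z μ t := hmarkov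
        _ ≤ Real.exp (-t * ε) * Real.exp (2 * t^2 * n) := by
            apply mul_le_mul_of_nonneg_left _ (Real.exp_nonneg _)
            exact hmgf
        _ = Real.exp (-ε^2 / (8*n)) := harith
    exact (ENNReal.le_ofReal_iff_toReal_le (measure_ne_top μ _) (Real.exp_nonneg _)).2 htoReal
  -- step 3: union bound
  calc μ {ω | ε ≤ ∑ s', |∑ i ∈ Finset.Icc 1 n, X i ω s'|}
      ≤ μ (⋃ x, A x) := measure_mono hsub
    _ ≤ ∑ x : S → Bool, μ (A x) := measure_iUnion_fintype_le μ A
    _ ≤ ∑ _x : S → Bool, ENNReal.ofReal (Real.exp (-ε^2 / (8*n))) :=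
        Finset.sum_le_sum fun x _ => hbound x
    _ = (Fintype.card (S → Bool)) • ENNReal.ofReal (Real.exp (-ε^2 / (8*n))) := by
        rw [Finset.sum_const, Finset.card_univ]
    _ = ENNReal.ofReal ((2 : ℝ) ^ (Fintype.card S) * Real.exp (-ε ^ 2 / (8 * n))) := by
        rw [Fintype.card_fun, Fintype.card_bool, nsmul_eq_mul,
          ENNReal.ofReal_mul (by positivity)]
        congr 1
        rw [ENNReal.ofReal_pow (by norm_num)]
        norm_num
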